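/- Four points a, b, c, d in general position in the plane with strictly increasing x-coordinates form a 4-gon (are in convex position) if and only if the segment ab bounds the convex hull of {a,b,c,d} and the segment cd bounds the convex hull of {a,b,c,d}; equivalently, c and d lie on the same side of line ab, and a and b lie on the same side of line cd. -/

import Mathlib

/-- Signed twice-area / 3x3 orientation determinant of three planar points. -/
def det3 (p q r : ℝ × ℝ) : ℝ :=
  (q.1 - p.1) * (r.2 - p.2) - (q.2 - p.2) * (r.1 - p.1)

/-- Orientation (chirotope) of a triple of points. -/
noncomputable def chi (p q r : ℝ × ℝ) : ℝ := Real.sign (det3 p q r)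

/-- A finite point set is in general position if no three distinct points are collinear. -/
def GenPos (S : Finset (ℝ × ℝ)) : Prop :=
  ∀ p ∈ S, ∀ q ∈ S, ∀ r ∈ S, p ≠ q → q ≠ r → p ≠ r → det3 p q r ≠ 0

/-- A finite point set is in convex position if every point is a vertex of the hull. -/
def ConvexPos (X : Finset (ℝ × ℝ)) : Prop :=
  ∀ p ∈ X, p ∉ convexHull ℝ ((X.erase p : Finset (ℝ × ℝ)) : Set (ℝ × ℝ))

/-- `X` is a `k`-hole of `S`: a `k`-subset in convex position whose convex hull
contains no point of `S \ X`. -/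
def IsHole (S X : Finset (ℝ × ℝ)) (k : ℕ) : Prop :=
  X ⊆ S ∧ X.card = k ∧ ConvexPos X ∧
    ∀ p ∈ S, p ∉ X → p ∉ convexHull ℝ (X : Set (ℝ × ℝ))

/-- Two holes are disjoint if their convex hulls are disjoint. -/
def DisjHoles (X Y : Finset (ℝ × ℝ)) : Prop :=
  Disjoint (convexHull ℝ (X : Set (ℝ × ℝ))) (convexHull ℝ (Y : Set (ℝ × ℝ)))

lemma det3_self1 (p r : ℝ × ℝ) : det3 p p r = 0 := by simp [det3]
lemma det3_self2 (p q : ℝ × ℝ) : det3 p q q = 0 := by simp [det3]; ring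
lemma det3_self3 (p q : ℝ × ℝ) : det3 p q p = 0 := by simp [det3]

lemma mem_triangle_iff {p q r : ℝ × ℝ} (hD : det3 p q r ≠ 0) (z : ℝ × ℝ) :
    z ∈ convexHull ℝ (({p, q, r} : Finset (ℝ × ℝ)) : Set (ℝ × ℝ)) ↔
      0 ≤ det3 q r z * det3 p q r ∧ 0 ≤ det3 p z r * det3 p q r ∧
        0 ≤ det3 p q z * det3 p q r := by
  have hpq : p ≠ q := by rintro rfl; exact hD (det3_self1 p r)
  have hqr : q ≠ r := by rintro rfl; exact hD (det3_self2 p q)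
  have hpr : p ≠ r := by rintro rfl; exact hD (det3_self3 p q)
  constructor
  · rw [Finset.mem_convexHull']
    rintro ⟨w, hw0, hw1, hwz⟩
    have hsum : w p + (w q + w r) = 1 := by
      simpa [Finset.sum_insert, Finset.mem_insert, Finset.mem_singleton, hpq, hqr, hpr] using hw1
    have hz' : w p • p + (w q • q + w r • r) = z := by
      simpa [Finset.sum_insert, Finset.mem_insert, Finset.mem_singleton, hpq, hqr, hpr] using hwz
    have e1 : w p * p.1 + (w q * q.1 + w r * r.1) = z.1 := by
      have := congrArg Prod.fst hz'; simpa using this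
    have e2 : w p * p.2 + (w q * q.2 + w r * r.2) = z.2 := by
      have := congrArg Prod.snd hz'; simpa using this
    have hp0 : 0 ≤ w p := hw0 p (by simp)
    have hq0 : 0 ≤ w q := hw0 q (by simp)
    have hr0 : 0 ≤ w r := hw0 r (by simp [hqr])
    have k1 : det3 q r z = w p * det3 p q r := by
      simp only [det3]
      linear_combination (r.2 - q.2) * e1 - (r.1 - q.1) * e2 + (r.1 * q.2 - r.2 * q.1) * hsum
    have k2 : det3 p z r = w q * det3 p q r := by
      simp only [det3]
      linear_combination -(r.2 - p.2) * e1 + (r.1 - p.1) * e2 + (p.1 * r.2 - p.2 * r.1) * hsum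
    have k3 : det3 p q z = w r * det3 p q r := by
      simp only [det3]
      linear_combination (q.2 - p.2) * e1 - (q.1 - p.1) * e2 + (p.2 * q.1 - p.1 * q.2) * hsum
    refine ⟨?_, ?_, ?_⟩
    · rw [k1, mul_assoc]; exact mul_nonneg hp0 (mul_self_nonneg _)
    · rw [k2, mul_assoc]; exact mul_nonneg hq0 (mul_self_nonneg _)
    · rw [k3, mul_assoc]; exact mul_nonneg hr0 (mul_self_nonneg _)
  · rintro ⟨h1, h2, h3⟩
    rw [Finset.mem_convexHull']
    have hD2 : (0:ℝ) < det3 p q r ^ 2 := by positivity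
    refine ⟨fun y => if y = p then det3 q r z / det3 p q r else
      if y = q then det3 p z r / det3 p q r else det3 p q z / det3 p q r, ?_, ?_, ?_⟩
    · intro y _
      simp only []
      split_ifs <;>
      · rw [div_nonneg_iff]
        rcases lt_or_gt_of_ne hD with h | h
        · right; constructor
          · nlinarith
          · linarith
        · left; exact ⟨by nlinarith, le_of_lt h⟩
    · rw [Finset.sum_insert (by simp [hpq, hpr]), Finset.sum_insert (by simp [hqr]),
        Finset.sum_singleton]
      simp only [if_pos rfl, if_neg hpq.symm, if_neg hqr.symm, if_neg hpr.symm, ↓reduceIte]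
      field_simp
      simp only [det3]; ring
    · rw [Finset.sum_insert (by simp [hpq, hpr]), Finset.sum_insert (by simp [hqr]),
        Finset.sum_singleton]
      simp only [if_pos rfl, if_neg hpq.symm, if_neg hqr.symm, if_neg hpr.symm, ↓reduceIte]
      have c1 : det3 q r z * p.1 + det3 p z r * q.1 + det3 p q z * r.1 = det3 p q r * z.1 := by
        simp only [det3]; ring
      have c2 : det3 q r z * p.2 + det3 p z r * q.2 + det3 p q z * r.2 = det3 p q r * z.2 := by
        simp only [det3]; ring
      ext
      · simp only [Prod.fst_add, Prod.smul_fst, smul_eq_mul]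
        field_simp
        linarith [c1]
      · simp only [Prod.snd_add, Prod.smul_snd, smul_eq_mul]
        field_simp
        linarith [c2]

lemma arith_key (D1 D2 D3 D4 t u v : ℝ) (h1 : D1 ≠ 0) (h2 : D2 ≠ 0) (h3 : D3 ≠ 0) (h4 : D4 ≠ 0)
    (ht : 0 < t) (hu : 0 < u) (hv : 0 < v)
    (hlin : D1 - D2 + D3 - D4 = 0)
    (hgp2 : D4 * (-t) - D1 * (u + v) + u * D2 = 0) :
    (¬(0 ≤ D3 * D4 ∧ 0 ≤ -D2 * D4 ∧ 0 ≤ D1 * D4) ∧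
     ¬(0 ≤ D4 * D3 ∧ 0 ≤ D2 * D3 ∧ 0 ≤ -D1 * D3) ∧
     ¬(0 ≤ -D4 * D2 ∧ 0 ≤ D3 * D2 ∧ 0 ≤ D1 * D2) ∧
     ¬(0 ≤ D4 * D1 ∧ 0 ≤ -D3 * D1 ∧ 0 ≤ D2 * D1)) ↔
      (0 < D1 * D2 ∧ 0 < D3 * D4) := by
  constructor
  · rintro ⟨hA, hB, hC, hD⟩
    rcases lt_or_gt_of_ne h1 with p1 | p1 <;>
    rcases lt_or_gt_of_ne h2 with p2 | p2 <;>
    rcases lt_or_gt_of_ne h3 with p3 | p3 <;>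
    rcases lt_or_gt_of_ne h4 with p4 | p4
    -- (----)
    · exact ⟨mul_pos_of_neg_of_neg p1 p2, mul_pos_of_neg_of_neg p3 p4⟩
    -- (---+)
    · exact absurd ⟨by nlinarith, by nlinarith, by nlinarith⟩ hC
    -- (--+-)
    · exact absurd ⟨by nlinarith, by nlinarith, by nlinarith⟩ hD
    -- (--++)
    · exact ⟨mul_pos_of_neg_of_neg p1 p2, mul_pos p3 p4⟩
    -- (-+--)
    · exact absurd ⟨by nlinarith, by nlinarith, by nlinarith⟩ hA
    -- (-+-+)
    · exact absurd hlin (by nlinarith)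
    -- (-++-)
    · exact absurd hgp2 (by nlinarith [mul_pos ht (neg_pos.2 p4), mul_pos (add_pos hu hv) (neg_pos.2 p1), mul_pos hu p2])
    -- (-+++)
    · exact absurd ⟨by nlinarith, by nlinarith, by nlinarith⟩ hB
    -- (+---)
    · exact absurd ⟨by nlinarith, by nlinarith, by nlinarith⟩ hB
    -- (+--+)
    · exact absurd hgp2 (by nlinarith [mul_pos ht p4, mul_pos (add_pos hu hv) p1, mul_pos hu (neg_pos.2 p2)])
    -- (+-+-)
    · exact absurd hlin (by nlinarith)
    -- (+-++)
    · exact absurd ⟨by nlinarith, by nlinarith, by nlinarith⟩ hA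
    -- (++--)
    · exact ⟨mul_pos p1 p2, mul_pos_of_neg_of_neg p3 p4⟩
    -- (++-+)
    · exact absurd ⟨by nlinarith, by nlinarith, by nlinarith⟩ hD
    -- (+++-)
    · exact absurd ⟨by nlinarith, by nlinarith, by nlinarith⟩ hC
    -- (++++)
    · exact ⟨mul_pos p1 p2, mul_pos p3 p4⟩
  · rintro ⟨h12, h34⟩
    refine ⟨?_, ?_, ?_, ?_⟩ <;> rintro ⟨k1, k2, k3⟩
    · nlinarith [mul_nonneg k2 k3, mul_pos h12 (mul_self_pos.mpr h4)]
    · nlinarith [mul_nonneg k2 k3, mul_pos h12 (mul_self_pos.mpr h3)]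
    · nlinarith [mul_nonneg k1 k2, mul_pos h34 (mul_self_pos.mpr h2)]
    · nlinarith [mul_nonneg k1 k2, mul_pos h34 (mul_self_pos.mpr h1)]

/-- Four points in general position with strictly increasing `x`-coordinates are
in convex position iff `c,d` lie on the same side of line `ab` and `a,b` lie on
the same side of line `cd`. -/
theorem convex_position_iff_bounding_segments (a b c d : ℝ × ℝ)
    (hab : a.1 < b.1) (hbc : b.1 < c.1) (hcd : c.1 < d.1)
    (hgp : GenPos {a, b, c, d}) :
    ConvexPos {a, b, c, d} ↔
      (0 < det3 a b c * det3 a b d ∧ 0 < det3 c d a * det3 c d b) := by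
  have hac : a.1 < c.1 := hab.trans hbc
  have hbd : b.1 < d.1 := hbc.trans hcd
  have had : a.1 < d.1 := hab.trans hbd
  have nab : a ≠ b := fun h => hab.ne (congrArg Prod.fst h)
  have nac : a ≠ c := fun h => hac.ne (congrArg Prod.fst h)
  have nad : a ≠ d := fun h => had.ne (congrArg Prod.fst h)
  have nbc : b ≠ c := fun h => hbc.ne (congrArg Prod.fst h)
  have nbd : b ≠ d := fun h => hbd.ne (congrArg Prod.fst h)
  have ncd : c ≠ d := fun h => hcd.ne (congrArg Prod.fst h)
  have ma : a ∈ ({a,b,c,d} : Finset (ℝ × ℝ)) := by simp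
  have mb : b ∈ ({a,b,c,d} : Finset (ℝ × ℝ)) := by simp
  have mc : c ∈ ({a,b,c,d} : Finset (ℝ × ℝ)) := by simp
  have md : d ∈ ({a,b,c,d} : Finset (ℝ × ℝ)) := by simp
  have hD1 : det3 a b c ≠ 0 := hgp a ma b mb c mc nab nbc nac
  have hD2 : det3 a b d ≠ 0 := hgp a ma b mb d md nab nbd nad
  have hD3 : det3 a c d ≠ 0 := hgp a ma c mc d md nac ncd nad
  have hD4 : det3 b c d ≠ 0 := hgp b mb c mc d md nbc ncd nbd
  -- permutation identities
  have r1 : det3 c d a = det3 a c d := by simp only [det3]; ring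
  have r2 : det3 c d b = det3 b c d := by simp only [det3]; ring
  have r3 : det3 b a d = -det3 a b d := by simp only [det3]; ring
  have r4 : det3 b c a = det3 a b c := by simp only [det3]; ring
  have r5 : det3 a c b = -det3 a b c := by simp only [det3]; ring
  have r6 : det3 b d c = -det3 b c d := by simp only [det3]; ring
  have r7 : det3 a d c = -det3 a c d := by simp only [det3]; ring
  -- erase computations
  have hea : ({a,b,c,d} : Finset (ℝ × ℝ)).erase a = {b,c,d} :=
    Finset.erase_insert (by simp [nab, nac, nad])
  have heb : ({a,b,c,d} : Finset (ℝ × ℝ)).erase b = {a,c,d} := by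
    rw [Finset.erase_insert_of_ne nab, Finset.erase_insert (by simp [nbc, nbd])]
  have hec : ({a,b,c,d} : Finset (ℝ × ℝ)).erase c = {a,b,d} := by
    rw [Finset.erase_insert_of_ne nac, Finset.erase_insert_of_ne nbc,
      Finset.erase_insert (by simp [ncd])]
  have hed : ({a,b,c,d} : Finset (ℝ × ℝ)).erase d = {a,b,c} := by
    rw [Finset.erase_insert_of_ne nad, Finset.erase_insert_of_ne nbd,
      Finset.erase_insert_of_ne ncd]
    simp
  have memA : a ∈ convexHull ℝ (({b,c,d} : Finset (ℝ × ℝ)) : Set (ℝ × ℝ)) ↔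
      (0 ≤ det3 a c d * det3 b c d ∧ 0 ≤ -det3 a b d * det3 b c d ∧
        0 ≤ det3 a b c * det3 b c d) := by
    rw [mem_triangle_iff hD4, r1, r3, r4]
  have memB : b ∈ convexHull ℝ (({a,c,d} : Finset (ℝ × ℝ)) : Set (ℝ × ℝ)) ↔
      (0 ≤ det3 b c d * det3 a c d ∧ 0 ≤ det3 a b d * det3 a c d ∧
        0 ≤ -det3 a b c * det3 a c d) := by
    rw [mem_triangle_iff hD3, r2, r5]
  have memC : c ∈ convexHull ℝ (({a,b,d} : Finset (ℝ × ℝ)) : Set (ℝ × ℝ)) ↔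
      (0 ≤ -det3 b c d * det3 a b d ∧ 0 ≤ det3 a c d * det3 a b d ∧
        0 ≤ det3 a b c * det3 a b d) := by
    rw [mem_triangle_iff hD2, r6]
  have memD : d ∈ convexHull ℝ (({a,b,c} : Finset (ℝ × ℝ)) : Set (ℝ × ℝ)) ↔
      (0 ≤ det3 b c d * det3 a b c ∧ 0 ≤ -det3 a c d * det3 a b c ∧
        0 ≤ det3 a b d * det3 a b c) := by
    rw [mem_triangle_iff hD1, r7]
  have cpiff : ConvexPos {a,b,c,d} ↔
      (a ∉ convexHull ℝ (({b,c,d} : Finset (ℝ × ℝ)) : Set (ℝ × ℝ)) ∧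
       b ∉ convexHull ℝ (({a,c,d} : Finset (ℝ × ℝ)) : Set (ℝ × ℝ)) ∧
       c ∉ convexHull ℝ (({a,b,d} : Finset (ℝ × ℝ)) : Set (ℝ × ℝ)) ∧
       d ∉ convexHull ℝ (({a,b,c} : Finset (ℝ × ℝ)) : Set (ℝ × ℝ))) := by
    constructor
    · intro h
      refine ⟨?_, ?_, ?_, ?_⟩
      · have := h a ma; rwa [hea] at this
      · have := h b mb; rwa [heb] at this
      · have := h c mc; rwa [hec] at this
      · have := h d md; rwa [hed] at this
    · rintro ⟨h1, h2, h3, h4⟩ p hp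
      simp only [Finset.mem_insert, Finset.mem_singleton] at hp
      rcases hp with rfl | rfl | rfl | rfl
      · rwa [hea]
      · rwa [heb]
      · rwa [hec]
      · rwa [hed]
  rw [cpiff, memA, memB, memC, memD, r1, r2]
  -- now pure arithmetic
  set D1 := det3 a b c with hD1d
  set D2 := det3 a b d with hD2d
  set D3 := det3 a c d with hD3d
  set D4 := det3 b c d with hD4d
  have hlin : D1 - D2 + D3 - D4 = 0 := by
    rw [hD1d, hD2d, hD3d, hD4d]; simp only [det3]; ring
  have hgp2' : D4 * (-(b.1 - a.1)) - D1 * ((c.1 - b.1) + (d.1 - c.1)) + (c.1 - b.1) * D2 = 0 := by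
    rw [hD1d, hD2d, hD4d]; simp only [det3]; ring
  exact arith_key D1 D2 D3 D4 (b.1 - a.1) (c.1 - b.1) (d.1 - c.1) hD1 hD2 hD3 hD4
    (by linarith) (by linarith) (by linarith) hlin hgp2'
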